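/- Let E = E_I ⊔ E_II be a finite subset of R with |E_II| = N, let h_I: E_I → R≥0 and h_II: E_II → R>0, and define f on E by f(x) = h_I(x)²/∏_{y∈E_II}(x−y)² for x ∈ E_I, and f(x) = 1/(h_II(x)² ∏_{y∈E_II, y≠x}(x−y)²) for x ∈ E_II. Let L = [[0, A], [−Aᵀ, 0]] with A(a,b) = h_I(a)h_II(b)/(a−b) for a ∈ E_I, b ∈ E_II. Then for every balanced subset X = {a₁,…,a_d} ⊔ {b₁,…,b_d} (a_i ∈ E_I, b_i ∈ E_II), det L_X = ∏_i h_I(a_i)²h_II(b_i)² · det[1/(a_i−b_j)]², and the L-ensemble probability det L_X/det(1+L) equals the probability of X^Δ = {a₁,…,a_d} ⊔ (E_II \ {b₁,…,b_d}) under the N-point polynomial ensemble with weight f. -/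

import Mathlib

open Finset Matrix

lemma det_piecewise_one {n : Type*} [Fintype n] [DecidableEq n] (S : Finset n)
    (M : Matrix n n ℝ) :
    Matrix.det (S.piecewise M (1 : Matrix n n ℝ)) =
      (M.submatrix (Subtype.val : {x // x ∈ S} → n) Subtype.val).det := by
  classical
  refine (Matrix.det_submatrix_equiv_self (Equiv.sumCompl (· ∈ S)) _).symm.trans ?_
  have : Matrix.submatrix (S.piecewise M (1 : Matrix n n ℝ)) (Equiv.sumCompl (· ∈ S))
      (Equiv.sumCompl (· ∈ S)) =
      Matrix.fromBlocks (M.submatrix Subtype.val Subtype.val)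
        (M.submatrix Subtype.val Subtype.val) 0 1 := by
    ext (i | i) (j | j) <;>
      simp only [Matrix.submatrix_apply, Equiv.sumCompl_apply_inl, Equiv.sumCompl_apply_inr,
        Matrix.fromBlocks_apply₁₁, Matrix.fromBlocks_apply₁₂, Matrix.fromBlocks_apply₂₁,
        Matrix.fromBlocks_apply₂₂, Matrix.zero_apply]
    · show (if (i : n) ∈ S then M i else (1 : Matrix n n ℝ) i) j = _
      rw [if_pos i.2]
    · show (if (i : n) ∈ S then M i else (1 : Matrix n n ℝ) i) j = _
      rw [if_pos i.2]
    · show (if (i : n) ∈ S then M i else (1 : Matrix n n ℝ) i) j = _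
      rw [if_neg i.2]
      exact Matrix.one_apply_ne fun (h : (i : n) = j) => i.2 (h ▸ j.2)
    · show (if (i : n) ∈ S then M i else (1 : Matrix n n ℝ) i) j = _
      rw [if_neg i.2]
      simp [Matrix.one_apply, Subtype.val_inj]
  rw [this, Matrix.det_fromBlocks_zero₂₁, Matrix.det_one, mul_one]

lemma det_one_add_sum_minors {n : Type*} [Fintype n] [DecidableEq n] (M : Matrix n n ℝ) :
    (1 + M).det = ∑ S : Finset n,
      (M.submatrix (Subtype.val : {x // x ∈ S} → n) Subtype.val).det := by
  classical
  have h1 : (1 + M) = (fun i => M i) + (fun i => (1 : Matrix n n ℝ) i) := by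
    funext i j; simp [Matrix.add_apply]; ring
  have := (Matrix.detRowAlternating (R := ℝ) (n := n)).toMultilinearMap.map_add_univ
    (fun i => M i) (fun i => (1 : Matrix n n ℝ) i)
  calc (1 + M).det = Matrix.detRowAlternating ((fun i => M i) + (fun i => (1 : Matrix n n ℝ) i)) := by
        rw [← h1]; rfl
    _ = ∑ S : Finset n, Matrix.detRowAlternating (S.piecewise M (1 : Matrix n n ℝ)) := this
    _ = _ := by
        refine Finset.sum_congr rfl fun S _ => ?_
        exact det_piecewise_one S M


lemma det_skew_pair {k : ℕ} (M : Matrix (Fin k) (Fin k) ℝ) :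
    Matrix.det (Matrix.fromBlocks 0 M (-Mᵀ) 0) = M.det ^ 2 := by
  have h1 : (Matrix.fromBlocks 0 M (-Mᵀ) (0 : Matrix (Fin k) (Fin k) ℝ)) =
      Matrix.fromBlocks M 0 0 Mᵀ * Matrix.fromBlocks 0 1 (-1) 0 := by
    rw [Matrix.fromBlocks_multiply]
    simp
  have h2 : (Matrix.fromBlocks (0 : Matrix (Fin k) (Fin k) ℝ) 1 (-1) 0) =
      (Matrix.fromBlocks 1 1 0 1 : Matrix (Fin k ⊕ Fin k) (Fin k ⊕ Fin k) ℝ) *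
        ((Matrix.fromBlocks 1 0 (-1) 1 : Matrix (Fin k ⊕ Fin k) (Fin k ⊕ Fin k) ℝ) *
          (Matrix.fromBlocks 1 1 0 1 : Matrix (Fin k ⊕ Fin k) (Fin k ⊕ Fin k) ℝ)) := by
    rw [Matrix.fromBlocks_multiply, Matrix.fromBlocks_multiply]
    norm_num
  rw [h1, Matrix.det_mul, h2, Matrix.det_mul, Matrix.det_mul,
    Matrix.det_fromBlocks_zero₂₁, Matrix.det_fromBlocks_zero₂₁,
    Matrix.det_fromBlocks_zero₁₂, Matrix.det_one, Matrix.det_transpose]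
  ring

lemma detL_balanced (EI EII : Finset ℝ) (hdisj : Disjoint EI EII) (hI hII : ℝ → ℝ)
    (Lker : ℝ → ℝ → ℝ)
    (hLker : ∀ a b : ℝ, Lker a b =
      if a ∈ EI ∧ b ∈ EII then hI a * hII b / (a - b)
      else if a ∈ EII ∧ b ∈ EI then -(hI b * hII a / (b - a)) else 0)
    {k : ℕ} (a b : Fin k → ℝ)
    (ha : Function.Injective a) (hb : Function.Injective b)
    (haI : ∀ i, a i ∈ EI) (hbII : ∀ i, b i ∈ EII) :
    Matrix.det (Matrix.of fun p q :
        {x // x ∈ (Finset.image a Finset.univ ∪ Finset.image b Finset.univ)} =>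
        Lker (p : ℝ) (q : ℝ))
      = (∏ i, (hI (a i)) ^ 2 * (hII (b i)) ^ 2) *
        (Matrix.det (Matrix.of fun i j : Fin k => (a i - b j)⁻¹)) ^ 2 := by
  classical
  have hanotII : ∀ i, a i ∉ EII := fun i => Finset.disjoint_left.mp hdisj (haI i)
  have hbnotI : ∀ i, b i ∉ EI := fun i => Finset.disjoint_right.mp hdisj (hbII i)
  set X : Finset ℝ := Finset.image a Finset.univ ∪ Finset.image b Finset.univ with hX
  have hmema : ∀ i, a i ∈ X := fun i =>
    Finset.mem_union_left _ (Finset.mem_image_of_mem a (Finset.mem_univ i))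
  have hmemb : ∀ i, b i ∈ X := fun i =>
    Finset.mem_union_right _ (Finset.mem_image_of_mem b (Finset.mem_univ i))
  have hbij : Function.Bijective (Sum.elim (fun i => (⟨a i, hmema i⟩ : {x // x ∈ X}))
      (fun i => (⟨b i, hmemb i⟩ : {x // x ∈ X}))) := by
    constructor
    · rintro (i | i) (j | j) h <;> simp only [Sum.elim_inl, Sum.elim_inr,
        Subtype.mk.injEq] at h
      · exact congrArg Sum.inl (ha h)
      · exact absurd (h ▸ hbII j) (hanotII i)
      · exact absurd (h ▸ haI j) (hbnotI i)
      · exact congrArg Sum.inr (hb h)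
    · rintro ⟨x, hx⟩
      rcases Finset.mem_union.mp hx with h | h
      · obtain ⟨i, -, rfl⟩ := Finset.mem_image.mp h
        exact ⟨Sum.inl i, rfl⟩
      · obtain ⟨i, -, rfl⟩ := Finset.mem_image.mp h
        exact ⟨Sum.inr i, rfl⟩
  set e := Equiv.ofBijective _ hbij with he
  rw [← Matrix.det_submatrix_equiv_self e]
  set Mb : Matrix (Fin k) (Fin k) ℝ :=
    Matrix.of (fun i j => hI (a i) * hII (b j) / (a i - b j)) with hMb
  have hsub : Matrix.submatrix (Matrix.of fun p q : {x // x ∈ X} => Lker (p : ℝ) (q : ℝ)) e e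
      = Matrix.fromBlocks 0 Mb (-(Mbᵀ)) 0 := by
    ext (i | i) (j | j) <;>
      simp only [Matrix.submatrix_apply, he, Equiv.ofBijective_apply, Sum.elim_inl, Sum.elim_inr,
        Matrix.of_apply, Matrix.fromBlocks_apply₁₁, Matrix.fromBlocks_apply₁₂,
        Matrix.fromBlocks_apply₂₁, Matrix.fromBlocks_apply₂₂, Matrix.zero_apply,
        Matrix.neg_apply, Matrix.transpose_apply, hMb, hLker]
    · rw [if_neg (fun h => hanotII j h.2), if_neg (fun h => hanotII i h.1)]
    · rw [if_pos ⟨haI i, hbII j⟩]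
    · rw [if_neg (fun h => hbnotI i h.1), if_pos ⟨hbII i, haI j⟩]
    · rw [if_neg (fun h => hbnotI i h.1), if_neg (fun h => hbnotI j h.2)]
  rw [hsub, det_skew_pair]
  have hMb2 : Mb.det = (∏ i, hI (a i)) * ((∏ i, hII (b i)) *
      Matrix.det (Matrix.of fun i j : Fin k => (a i - b j)⁻¹)) := by
    have h3 : Mb = Matrix.of (fun i j =>
        hI (a i) * ((Matrix.of fun i' j' => hII (b j') *
          ((Matrix.of fun i'' j'' : Fin k => (a i'' - b j'')⁻¹) i' j')) i j)) := by
      ext i j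
      simp [hMb, div_eq_mul_inv]
      ring
    rw [h3, Matrix.det_mul_column, Matrix.det_mul_row]
  rw [hMb2]
  rw [Finset.prod_mul_distrib, Finset.prod_pow, Finset.prod_pow]
  ring


lemma det_cauchy_like {k : ℕ} (a b : Fin k → ℝ) (hb : Function.Injective b)
    (hab : ∀ i j, a i ≠ b j) :
    Matrix.det (Matrix.of fun i j : Fin k => (a i - b j)⁻¹) =
      ((∏ i, ∏ j ∈ Finset.Ioi i, (a j - a i)) *
        (∏ j, ∏ m ∈ Finset.univ.erase j, (b j - b m))) /
      ((∏ i, ∏ j ∈ Finset.Ioi i, (b j - b i)) * ∏ i, ∏ j, (a i - b j)) := by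
  classical
  set p : Fin k → Polynomial ℝ :=
    fun j => ∏ m ∈ Finset.univ.erase j, (Polynomial.X - Polynomial.C (b m)) with hp
  have hdeg : ∀ j, (p j).natDegree < k := by
    intro j
    have h1 : (p j).natDegree = (Finset.univ.erase j).card := by
      rw [hp]
      rw [Polynomial.natDegree_prod _ _ (fun m _ => Polynomial.X_sub_C_ne_zero (b m))]
      simp [Polynomial.natDegree_X_sub_C]
    rw [h1, Finset.card_erase_of_mem (Finset.mem_univ j)]
    simp only [Finset.card_univ, Fintype.card_fin]
    exact Nat.sub_lt j.pos Nat.one_pos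
  have heval : ∀ (x : ℝ) j, (p j).eval x = ∏ m ∈ Finset.univ.erase j, (x - b m) := by
    intro x j; simp [hp, Polynomial.eval_prod]
  set Cf : Matrix (Fin k) (Fin k) ℝ := Matrix.of (fun m j => (p j).coeff m) with hCf
  set W : Matrix (Fin k) (Fin k) ℝ := Matrix.of (fun i j => (p j).eval (a i)) with hW
  have hWv : W = Matrix.vandermonde a * Cf := by
    ext i j
    rw [Matrix.mul_apply, hW]
    simp only [Matrix.of_apply, Matrix.vandermonde_apply, hCf]
    rw [Polynomial.eval_eq_sum_range' (hdeg j), ← Finset.sum_range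
      (fun m => a i ^ m * (p j).coeff m)]
    exact Finset.sum_congr rfl fun m _ => mul_comm _ _
  have hdiag : Matrix.vandermonde b * Cf =
      Matrix.diagonal (fun j => ∏ m ∈ Finset.univ.erase j, (b j - b m)) := by
    ext i j
    have h2 : (Matrix.vandermonde b * Cf) i j = (p j).eval (b i) := by
      rw [Matrix.mul_apply]
      simp only [Matrix.of_apply, Matrix.vandermonde_apply, hCf]
      rw [Polynomial.eval_eq_sum_range' (hdeg j), ← Finset.sum_range
        (fun m => b i ^ m * (p j).coeff m)]
      exact Finset.sum_congr rfl fun m _ => mul_comm _ _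
    rw [h2, heval]
    rcases eq_or_ne i j with rfl | hij
    · rw [Matrix.diagonal_apply_eq]
    · rw [Matrix.diagonal_apply_ne _ hij]
      exact Finset.prod_eq_zero (Finset.mem_erase.mpr ⟨hij, Finset.mem_univ i⟩) (by simp)
  have hVb : (Matrix.vandermonde b).det ≠ 0 := (Matrix.det_vandermonde_ne_zero_iff).mpr hb
  have hdetCf : (Matrix.vandermonde b).det * Cf.det =
      ∏ j, ∏ m ∈ Finset.univ.erase j, (b j - b m) := by
    rw [← Matrix.det_mul, hdiag, Matrix.det_diagonal]
  have habne : ∀ i, (∏ m, (a i - b m)) ≠ 0 := fun i =>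
    Finset.prod_ne_zero_iff.mpr fun m _ => sub_ne_zero.mpr (hab i m)
  have hCrel : (Matrix.of fun i j : Fin k => (a i - b j)⁻¹) =
      Matrix.of (fun i j => (∏ m, (a i - b m))⁻¹ * (W i j)) := by
    ext i j
    simp only [Matrix.of_apply, hW, heval]
    have h1 : (∏ m, (a i - b m)) = (a i - b j) * ∏ m ∈ Finset.univ.erase j, (a i - b m) :=
      (Finset.mul_prod_erase Finset.univ _ (Finset.mem_univ j)).symm
    have h2 : (∏ m ∈ Finset.univ.erase j, (a i - b m)) ≠ 0 :=
      Finset.prod_ne_zero_iff.mpr fun m _ => sub_ne_zero.mpr (hab i m)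
    rw [h1, mul_inv, mul_assoc, inv_mul_cancel₀ h2, mul_one]
  rw [hCrel, Matrix.det_mul_column, hWv, Matrix.det_mul]
  rw [Matrix.det_vandermonde a, Matrix.det_vandermonde b] at *
  have hCfv : Cf.det = (∏ j, ∏ m ∈ Finset.univ.erase j, (b j - b m)) /
      (∏ i, ∏ j ∈ Finset.Ioi i, (b j - b i)) := by
    field_simp at hdetCf ⊢
    linarith [hdetCf]
  rw [hCfv]
  rw [Finset.prod_inv_distrib]
  field_simp


/-- squared-Vandermonde-type product of a finset -/
noncomputable def vdP (S : Finset ℝ) : ℝ := ∏ x ∈ S, ∏ y ∈ S.erase x, |x - y|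

/-- cross product of absolute differences -/
noncomputable def cAP (U V : Finset ℝ) : ℝ := ∏ x ∈ U, ∏ y ∈ V, |x - y|

lemma prod_offDiag (S : Finset ℝ) (g : ℝ → ℝ → ℝ) :
    ∏ q ∈ S.offDiag, g q.1 q.2 = ∏ x ∈ S, ∏ y ∈ S.erase x, g x y := by
  classical
  rw [show S.offDiag = (S ×ˢ S).filter (fun a => a.1 ≠ a.2) from by
    ext q; simp [Finset.mem_offDiag, and_assoc], Finset.prod_filter, Finset.prod_product]
  refine Finset.prod_congr rfl fun x _ => ?_
  rw [← Finset.prod_filter]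
  congr 1
  ext y
  simp [Finset.mem_filter, Finset.mem_erase, and_comm, ne_comm]

lemma cAP_comm (U V : Finset ℝ) : cAP U V = cAP V U := by
  rw [cAP, cAP, Finset.prod_comm]
  exact Finset.prod_congr rfl fun y _ => Finset.prod_congr rfl fun x _ => abs_sub_comm _ _

lemma vdP_pos (S : Finset ℝ) : 0 < vdP S := by
  refine Finset.prod_pos fun x hx => Finset.prod_pos fun y hy => ?_
  have : y ≠ x := (Finset.mem_erase.mp hy).1
  exact abs_pos.mpr (sub_ne_zero.mpr (Ne.symm this))

lemma cAP_pos {U V : Finset ℝ} (h : Disjoint U V) : 0 < cAP U V := by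
  refine Finset.prod_pos fun x hx => Finset.prod_pos fun y hy => ?_
  have : x ≠ y := fun hxy => Finset.disjoint_left.mp h hx (hxy ▸ hy)
  exact abs_pos.mpr (sub_ne_zero.mpr this)

lemma vdP_union {U V : Finset ℝ} (h : Disjoint U V) :
    vdP (U ∪ V) = (vdP U * vdP V) * (cAP U V * cAP V U) := by
  classical
  rw [vdP, Finset.prod_union h]
  have hU : ∀ x ∈ U, ∏ y ∈ (U ∪ V).erase x, |x - y| =
      (∏ y ∈ U.erase x, |x - y|) * ∏ y ∈ V, |x - y| := by
    intro x hx
    rw [Finset.erase_union_distrib, Finset.erase_eq_of_notMem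
      (Finset.disjoint_left.mp h hx), Finset.prod_union
      (h.mono (Finset.erase_subset _ _) le_rfl)]
  have hV : ∀ x ∈ V, ∏ y ∈ (U ∪ V).erase x, |x - y| =
      (∏ y ∈ V.erase x, |x - y|) * ∏ y ∈ U, |x - y| := by
    intro x hx
    rw [Finset.erase_union_distrib, Finset.erase_eq_of_notMem
      (Finset.disjoint_right.mp h hx), Finset.prod_union
      (h.mono le_rfl (Finset.erase_subset _ _)), mul_comm]
  rw [Finset.prod_congr rfl hU, Finset.prod_congr rfl hV,
    Finset.prod_mul_distrib, Finset.prod_mul_distrib]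
  rw [vdP, vdP, cAP, cAP]
  ring

lemma prod_sq_eq_cAP_sq (U V : Finset ℝ) :
    ∏ x ∈ U, ∏ y ∈ V, (x - y) ^ 2 = (cAP U V) ^ 2 := by
  rw [cAP, ← Finset.prod_pow]
  refine Finset.prod_congr rfl fun x _ => ?_
  rw [← Finset.prod_pow]
  exact Finset.prod_congr rfl fun y _ => (sq_abs _).symm

lemma prod_sq_eq_vdP_sq (U : Finset ℝ) :
    ∏ x ∈ U, ∏ y ∈ U.erase x, (x - y) ^ 2 = (vdP U) ^ 2 := by
  rw [vdP, ← Finset.prod_pow]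
  refine Finset.prod_congr rfl fun x _ => ?_
  rw [← Finset.prod_pow]
  exact Finset.prod_congr rfl fun y _ => (sq_abs _).symm

lemma pairing_sq {k : ℕ} (v : Fin k → ℝ) :
    (∏ i, ∏ j ∈ Finset.Ioi i, (v j - v i)) ^ 2 =
      ∏ i, ∏ j ∈ Finset.univ.erase i, |v i - v j| := by
  have h := Finset.prod_prod_Ioi_mul_eq_prod_prod_off_diag
    (f := fun x y : Fin k => |v x - v y|)
  simp only [Finset.compl_singleton] at h
  calc (∏ i, ∏ j ∈ Finset.Ioi i, (v j - v i)) ^ 2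
      = ∏ i, ∏ j ∈ Finset.Ioi i, (|v j - v i| * |v i - v j|) := by
        rw [← Finset.prod_pow]
        refine Finset.prod_congr rfl fun i _ => ?_
        rw [← Finset.prod_pow]
        refine Finset.prod_congr rfl fun j _ => ?_
        rw [abs_sub_comm (v i) (v j), ← sq, sq_abs]
    _ = ∏ i, ∏ j ∈ Finset.univ.erase i, |v j - v i| := by
        convert h using 2 with i hi
    _ = ∏ i, ∏ j ∈ Finset.univ.erase i, |v i - v j| := by
        refine Finset.prod_congr rfl fun i _ => ?_
        exact Finset.prod_congr rfl fun j _ => abs_sub_comm _ _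
open Polynomial
lemma master_weight (EI EII : Finset ℝ) (hdisj : Disjoint EI EII)
    (hI hII : ℝ → ℝ) (hII0 : ∀ x ∈ EII, 0 < hII x)
    (f : ℝ → ℝ)
    (hfI : ∀ x ∈ EI, f x = (hI x) ^ 2 / ∏ y ∈ EII, (x - y) ^ 2)
    (hfII : ∀ x ∈ EII, f x = 1 / ((hII x) ^ 2 * ∏ y ∈ EII.erase x, (x - y) ^ 2))
    {k : ℕ} (a b : Fin k → ℝ)
    (ha : Function.Injective a) (hb : Function.Injective b)
    (haI : ∀ i, a i ∈ EI) (hbII : ∀ i, b i ∈ EII) :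
    (∏ i, (hI (a i)) ^ 2 * (hII (b i)) ^ 2) *
      (Matrix.det (Matrix.of fun i j : Fin k => (a i - b j)⁻¹)) ^ 2
    = ((∏ x ∈ EII, (hII x) ^ 2) * ∏ q ∈ EII.offDiag, |q.1 - q.2|) *
      ((∏ x ∈ (Finset.image a Finset.univ ∪ (EII \ Finset.image b Finset.univ)), f x) *
        ∏ q ∈ (Finset.image a Finset.univ ∪
          (EII \ Finset.image b Finset.univ)).offDiag, |q.1 - q.2|) := by
  classical
  set S : Finset ℝ := Finset.image a Finset.univ with hS
  set T : Finset ℝ := Finset.image b Finset.univ with hT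
  set R : Finset ℝ := EII \ T with hR
  have hainj : ∀ x ∈ (Finset.univ : Finset (Fin k)), ∀ y ∈ Finset.univ, a x = a y → x = y :=
    fun x _ y _ h => ha h
  have hbinj : ∀ x ∈ (Finset.univ : Finset (Fin k)), ∀ y ∈ Finset.univ, b x = b y → x = y :=
    fun x _ y _ h => hb h
  have hSsub : S ⊆ EI := by
    intro x hx; obtain ⟨i, -, rfl⟩ := Finset.mem_image.mp hx; exact haI i
  have hTsub : T ⊆ EII := by
    intro x hx; obtain ⟨i, -, rfl⟩ := Finset.mem_image.mp hx; exact hbII i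
  have hRsub : R ⊆ EII := Finset.sdiff_subset
  have hab : ∀ i j, a i ≠ b j := fun i j h =>
    Finset.disjoint_left.mp hdisj (haI i) (h ▸ hbII j)
  have hdTR : Disjoint T R := Finset.disjoint_sdiff
  have hdSR : Disjoint S R := hdisj.mono hSsub hRsub
  have hdST : Disjoint S T := hdisj.mono hSsub hTsub
  have hTR : T ∪ R = EII := Finset.union_sdiff_of_subset hTsub
  have tS : ∀ g : ℝ → ℝ, ∏ x ∈ S, g x = ∏ i, g (a i) := fun g => Finset.prod_image hainj
  have tT : ∀ g : ℝ → ℝ, ∏ x ∈ T, g x = ∏ i, g (b i) := fun g => Finset.prod_image hbinj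
  have tvdS : vdP S = ∏ i, ∏ j ∈ Finset.univ.erase i, |a i - a j| := by
    rw [vdP, tS (fun x => ∏ y ∈ S.erase x, |x - y|)]
    refine Finset.prod_congr rfl fun i _ => ?_
    rw [hS, ← Finset.image_erase ha, Finset.prod_image]
    intro x hx y hy h; exact ha h
  have tvdT : vdP T = ∏ i, ∏ j ∈ Finset.univ.erase i, |b i - b j| := by
    rw [vdP, tT (fun x => ∏ y ∈ T.erase x, |x - y|)]
    refine Finset.prod_congr rfl fun i _ => ?_
    rw [hT, ← Finset.image_erase hb, Finset.prod_image]
    intro x hx y hy h; exact hb h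
  have tcST : cAP S T = ∏ i, ∏ j, |a i - b j| := by
    rw [cAP, tS (fun x => ∏ y ∈ T, |x - y|)]
    exact Finset.prod_congr rfl fun i _ => tT _
  have hvd_off : ∀ U : Finset ℝ, ∏ q ∈ U.offDiag, |q.1 - q.2| = vdP U := by
    intro U; rw [vdP]; exact prod_offDiag U (fun x y => |x - y|)
  have hvT : vdP T ≠ 0 := (vdP_pos T).ne'
  have hvR : vdP R ≠ 0 := (vdP_pos R).ne'
  have hcST : cAP S T ≠ 0 := (cAP_pos hdST).ne'
  have hcSR : cAP S R ≠ 0 := (cAP_pos hdSR).ne'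
  have hcTR : cAP T R ≠ 0 := (cAP_pos hdTR).ne'
  have hPhiR : (∏ x ∈ R, (hII x) ^ 2) ≠ 0 :=
    (Finset.prod_pos fun x hx => pow_pos (hII0 x (hRsub hx)) 2).ne'
  -- LHS computation
  have hlhs : (∏ i, (hI (a i)) ^ 2 * (hII (b i)) ^ 2) *
      (Matrix.det (Matrix.of fun i j : Fin k => (a i - b j)⁻¹)) ^ 2 =
      ((∏ x ∈ S, (hI x) ^ 2) * ∏ x ∈ T, (hII x) ^ 2) *
        (vdP S * vdP T) / (cAP S T) ^ 2 := by
    rw [det_cauchy_like a b hb hab]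
    rw [div_pow, mul_pow, mul_pow]
    have e1 : (∏ i, ∏ j ∈ Finset.Ioi i, (a j - a i)) ^ 2 = vdP S := by
      rw [pairing_sq, tvdS]
    have e2 : (∏ i, ∏ j ∈ Finset.Ioi i, (b j - b i)) ^ 2 = vdP T := by
      rw [pairing_sq, tvdT]
    have e3 : (∏ j, ∏ m ∈ Finset.univ.erase j, (b j - b m)) ^ 2 = vdP T ^ 2 := by
      have h' : (∏ j, ∏ m ∈ Finset.univ.erase j, (b j - b m)) ^ 2 =
          ∏ j, ∏ m ∈ Finset.univ.erase j, (b j - b m) ^ 2 := by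
        rw [← Finset.prod_pow]
        exact Finset.prod_congr rfl fun j _ => (Finset.prod_pow _ _ _).symm
      rw [h', tvdT, ← Finset.prod_pow]
      refine Finset.prod_congr rfl fun j _ => ?_
      rw [← Finset.prod_pow]
      exact Finset.prod_congr rfl fun m _ => by rw [sq_abs]
    have e4 : (∏ i, ∏ j, (a i - b j)) ^ 2 = cAP S T ^ 2 := by
      have h' : (∏ i, ∏ j, (a i - b j)) ^ 2 = ∏ i, ∏ j, (a i - b j) ^ 2 := by
        rw [← Finset.prod_pow]
        exact Finset.prod_congr rfl fun j _ => (Finset.prod_pow _ _ _).symm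
      rw [h', tcST, ← Finset.prod_pow]
      refine Finset.prod_congr rfl fun i _ => ?_
      rw [← Finset.prod_pow]
      exact Finset.prod_congr rfl fun j _ => by rw [sq_abs]
    rw [e1, e2, e3, e4]
    rw [Finset.prod_mul_distrib, tS (fun x => hI x ^ 2), tT (fun x => hII x ^ 2)]
    field_simp
  -- RHS pieces
  have r1 : ∏ x ∈ EII, (hII x) ^ 2 = (∏ x ∈ T, (hII x) ^ 2) * ∏ x ∈ R, (hII x) ^ 2 := by
    rw [← hTR, Finset.prod_union hdTR]
  have r2 : vdP EII = vdP T * vdP R * (cAP T R * cAP R T) := by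
    rw [← hTR, vdP_union hdTR]
  have r3 : vdP (S ∪ R) = vdP S * vdP R * (cAP S R * cAP R S) := by
    rw [vdP_union hdSR]
  have r4 : ∏ x ∈ S, f x = (∏ x ∈ S, (hI x) ^ 2) / (cAP S T ^ 2 * cAP S R ^ 2) := by
    rw [Finset.prod_congr rfl (fun x hx => hfI x (hSsub hx)), Finset.prod_div_distrib]
    congr 1
    calc ∏ x ∈ S, ∏ y ∈ EII, (x - y) ^ 2
        = ∏ x ∈ S, ((∏ y ∈ T, (x - y) ^ 2) * ∏ y ∈ R, (x - y) ^ 2) := by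
          refine Finset.prod_congr rfl fun x _ => ?_
          rw [← hTR, Finset.prod_union hdTR]
      _ = (∏ x ∈ S, ∏ y ∈ T, (x - y) ^ 2) * ∏ x ∈ S, ∏ y ∈ R, (x - y) ^ 2 :=
          Finset.prod_mul_distrib
      _ = cAP S T ^ 2 * cAP S R ^ 2 := by rw [prod_sq_eq_cAP_sq, prod_sq_eq_cAP_sq]
  have r5' : ∏ x ∈ R, ((hII x) ^ 2 * ∏ y ∈ EII.erase x, (x - y) ^ 2) =
      (∏ x ∈ R, (hII x) ^ 2) * (cAP R T ^ 2 * vdP R ^ 2) := by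
    rw [Finset.prod_mul_distrib]
    congr 1
    calc ∏ x ∈ R, ∏ y ∈ EII.erase x, (x - y) ^ 2
        = ∏ x ∈ R, ((∏ y ∈ T, (x - y) ^ 2) * ∏ y ∈ R.erase x, (x - y) ^ 2) := by
          refine Finset.prod_congr rfl fun x hx => ?_
          rw [← hTR, Finset.erase_union_distrib,
            Finset.erase_eq_of_notMem (Finset.disjoint_right.mp hdTR hx),
            Finset.prod_union (hdTR.mono le_rfl (Finset.erase_subset _ _))]
      _ = (∏ x ∈ R, ∏ y ∈ T, (x - y) ^ 2) * ∏ x ∈ R, ∏ y ∈ R.erase x, (x - y) ^ 2 :=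
          Finset.prod_mul_distrib
      _ = cAP R T ^ 2 * vdP R ^ 2 := by rw [prod_sq_eq_cAP_sq, prod_sq_eq_vdP_sq]
  have r5 : ∏ x ∈ R, f x =
      1 / ((∏ x ∈ R, (hII x) ^ 2) * (cAP R T ^ 2 * vdP R ^ 2)) := by
    rw [Finset.prod_congr rfl (fun x hx => hfII x (hRsub hx)), ← r5']
    rw [one_div, ← Finset.prod_inv_distrib]
    exact Finset.prod_congr rfl fun x _ => one_div _
  rw [hlhs, hvd_off, hvd_off, r2, r3, Finset.prod_union hdSR, r4, r5, r1,
    cAP_comm R T, cAP_comm R S]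
  field_simp
lemma detL_unbalanced (EI EII : Finset ℝ) (hdisj : Disjoint EI EII)
    (hI hII : ℝ → ℝ) (Lker : ℝ → ℝ → ℝ)
    (hLker : ∀ a b : ℝ, Lker a b =
      if a ∈ EI ∧ b ∈ EII then hI a * hII b / (a - b)
      else if a ∈ EII ∧ b ∈ EI then -(hI b * hII a / (b - a)) else 0)
    (X : Finset ℝ) (hunb : (X ∩ EI).card ≠ (X ∩ EII).card) :
    Matrix.det (Matrix.of fun p q : {x // x ∈ X} => Lker (p : ℝ) (q : ℝ)) = 0 := by
  classical
  set M : Matrix {x // x ∈ X} {x // x ∈ X} ℝ :=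
    Matrix.of (fun p q : {x // x ∈ X} => Lker (p : ℝ) (q : ℝ)) with hM
  have key : ∀ p q : {x // x ∈ X},
      (if (p : ℝ) ∈ EI then (2:ℝ) else 1) * M p q =
      (if (q : ℝ) ∈ EII then (2:ℝ) else 1) * M p q := by
    intro p q
    by_cases hp : (p : ℝ) ∈ EI <;> by_cases hq : (q : ℝ) ∈ EII <;>
      simp only [if_pos, if_neg, hp, hq, if_true, if_false, one_mul]
    · -- p ∈ EI, q ∉ EII : M p q = 0
      have : M p q = 0 := by
        rw [hM, Matrix.of_apply, hLker, if_neg (fun h => hq h.2),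
          if_neg (fun h => Finset.disjoint_left.mp hdisj hp h.1)]
      rw [this]; ring
    · -- p ∉ EI, q ∈ EII : M p q = 0
      have : M p q = 0 := by
        rw [hM, Matrix.of_apply, hLker, if_neg (fun h => hp h.1),
          if_neg (fun h => Finset.disjoint_right.mp hdisj hq h.2)]
      rw [this]; ring
  have h1 : Matrix.det (Matrix.of fun p q : {x // x ∈ X} =>
      (if (p : ℝ) ∈ EI then (2:ℝ) else 1) * M p q) =
      (∏ p : {x // x ∈ X}, if (p : ℝ) ∈ EI then (2:ℝ) else 1) * M.det :=
    Matrix.det_mul_column _ M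
  have h2 : Matrix.det (Matrix.of fun p q : {x // x ∈ X} =>
      (if (q : ℝ) ∈ EII then (2:ℝ) else 1) * M p q) =
      (∏ q : {x // x ∈ X}, if (q : ℝ) ∈ EII then (2:ℝ) else 1) * M.det :=
    Matrix.det_mul_row _ M
  have h3 : (∏ p : {x // x ∈ X}, if (p : ℝ) ∈ EI then (2:ℝ) else 1) * M.det =
      (∏ q : {x // x ∈ X}, if (q : ℝ) ∈ EII then (2:ℝ) else 1) * M.det := by
    rw [← h1, ← h2]
    congr 1
    ext p q
    exact key p q
  have hprod : ∀ F : Finset ℝ, (∏ p : {x // x ∈ X}, if (p : ℝ) ∈ F then (2:ℝ) else 1) =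
      2 ^ (X ∩ F).card := by
    intro F
    rw [Finset.prod_ite, Finset.prod_const, Finset.prod_const, one_pow, mul_one]
    congr 1
    rw [← Finset.filter_mem_eq_inter]
    refine Finset.card_bij (fun p _ => (p : ℝ)) ?_ ?_ ?_
    · intro p hp
      simp only [Finset.mem_filter, Finset.mem_univ, true_and] at hp
      exact Finset.mem_filter.mpr ⟨p.2, hp⟩
    · intro p _ q _ h
      exact Subtype.ext h
    · intro x hx
      obtain ⟨hxX, hxF⟩ := Finset.mem_filter.mp hx
      exact ⟨⟨x, hxX⟩, Finset.mem_filter.mpr ⟨Finset.mem_univ _, hxF⟩, rfl⟩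
  rw [hprod, hprod] at h3
  by_contra hne
  exact hunb ((pow_right_strictMono₀ (one_lt_two (α := ℝ))).injective
    (mul_right_cancel₀ hne h3))




/-- The relation between the L-ensemble built from the integrable
kernel `A(a,b) = h_I(a)h_II(b)/(a-b)` and the `N`-point polynomial ensemble with
the associated weight `f`, via the particle/hole involution `Δ` with respect
to `E_II`. -/
theorem stmt_17 (N d : ℕ) (EI EII : Finset ℝ) (hdisj : Disjoint EI EII)
    (hcard : EII.card = N)
    (hI hII : ℝ → ℝ) (hI0 : ∀ x ∈ EI, 0 ≤ hI x) (hII0 : ∀ x ∈ EII, 0 < hII x)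
    (f : ℝ → ℝ)
    (hfI : ∀ x ∈ EI, f x = (hI x) ^ 2 / ∏ y ∈ EII, (x - y) ^ 2)
    (hfII : ∀ x ∈ EII, f x = 1 / ((hII x) ^ 2 * ∏ y ∈ EII.erase x, (x - y) ^ 2))
    (Lker : ℝ → ℝ → ℝ)
    (hLker : ∀ a b : ℝ, Lker a b =
      if a ∈ EI ∧ b ∈ EII then hI a * hII b / (a - b)
      else if a ∈ EII ∧ b ∈ EI then -(hI b * hII a / (b - a)) else 0)
    (A B : Fin d → ℝ) (hA : Function.Injective A) (hB : Function.Injective B)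
    (hAI : ∀ i, A i ∈ EI) (hBII : ∀ i, B i ∈ EII) :
    let X : Finset ℝ := Finset.image A Finset.univ ∪ Finset.image B Finset.univ
    let Xd : Finset ℝ := Finset.image A Finset.univ ∪ (EII \ Finset.image B Finset.univ)
    let dX := Matrix.det (Matrix.of fun a b : {x // x ∈ X} => Lker (a : ℝ) (b : ℝ))
    dX = (∏ i : Fin d, (hI (A i)) ^ 2 * (hII (B i)) ^ 2) *
        (Matrix.det (Matrix.of fun i j : Fin d => (A i - B j)⁻¹)) ^ 2 ∧
    dX / Matrix.det
        (1 + Matrix.of fun a b : {x // x ∈ EI ∪ EII} => Lker (a : ℝ) (b : ℝ))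
      = ((∏ x ∈ Xd, f x) * ∏ q ∈ Xd.offDiag, |q.1 - q.2|) /
        (∑ Y ∈ (EI ∪ EII).powerset.filter (fun Y => Y.card = N),
          ((∏ x ∈ Y, f x) * ∏ q ∈ Y.offDiag, |q.1 - q.2|)) := by
  classical
  intro X Xd dX
  have part1 : dX = (∏ i : Fin d, (hI (A i)) ^ 2 * (hII (B i)) ^ 2) *
      (Matrix.det (Matrix.of fun i j : Fin d => (A i - B j)⁻¹)) ^ 2 :=
    detL_balanced EI EII hdisj hI hII Lker hLker A B hA hB hAI hBII
  refine ⟨part1, ?_⟩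
  set E : Finset ℝ := EI ∪ EII with hE
  set wF : Finset ℝ → ℝ :=
    fun Z => (∏ x ∈ Z, f x) * ∏ q ∈ Z.offDiag, |q.1 - q.2| with hwF
  set cst : ℝ := (∏ x ∈ EII, (hII x) ^ 2) * ∏ q ∈ EII.offDiag, |q.1 - q.2| with hcst
  have hvd_off : ∀ U : Finset ℝ, ∏ q ∈ U.offDiag, |q.1 - q.2| = vdP U := by
    intro U; rw [vdP]; exact prod_offDiag U (fun x y => |x - y|)
  have hcstpos : 0 < cst := by
    rw [hcst, hvd_off]
    exact mul_pos (Finset.prod_pos fun x hx => pow_pos (hII0 x hx) 2) (vdP_pos EII)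
  -- numerator
  have hnum : dX = cst * wF Xd := by
    rw [part1]
    exact master_weight EI EII hdisj hI hII hII0 f hfI hfII A B hA hB hAI hBII
  -- the minor function
  have hsplit : ∀ Y : Finset ℝ, Y ⊆ E → (Y ∩ EI) ∪ (Y ∩ EII) = Y := by
    intro Y hY
    ext x
    simp only [Finset.mem_union, Finset.mem_inter]
    constructor
    · rintro (⟨h1, -⟩ | ⟨h1, -⟩) <;> exact h1
    · intro hx
      rcases Finset.mem_union.mp (hY hx) with h | h
      · exact Or.inl ⟨hx, h⟩
      · exact Or.inr ⟨hx, h⟩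
  -- balanced minors
  have hbal : ∀ Y ∈ E.powerset.filter (fun Y => (Y ∩ EI).card = (Y ∩ EII).card),
      Matrix.det (Matrix.of fun p q : {x // x ∈ Y} => Lker (p : ℝ) (q : ℝ)) =
        cst * wF ((Y ∩ EI) ∪ (EII \ Y)) := by
    intro Y hY
    obtain ⟨hYE, hYbal⟩ := Finset.mem_filter.mp hY
    rw [Finset.mem_powerset] at hYE
    set k := (Y ∩ EI).card with hk
    set a : Fin k → ℝ := fun i => ((Y ∩ EI).equivFin.symm i : ℝ) with haa
    set b : Fin k → ℝ :=
      fun i => ((Y ∩ EII).equivFin.symm (Fin.cast hYbal i) : ℝ) with hbb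
    have ha : Function.Injective a := by
      intro i j h
      simp only [haa] at h
      exact (Y ∩ EI).equivFin.symm.injective (Subtype.ext h)
    have hb : Function.Injective b := by
      intro i j h
      simp only [hbb] at h
      have := (Y ∩ EII).equivFin.symm.injective (Subtype.ext h)
      exact Fin.cast_injective _ this
    have hmema : ∀ i, a i ∈ Y ∩ EI := by
      intro i; simp only [haa]; exact ((Y ∩ EI).equivFin.symm i).2
    have hmemb : ∀ i, b i ∈ Y ∩ EII := by
      intro i; simp only [hbb]; exact ((Y ∩ EII).equivFin.symm (Fin.cast hYbal i)).2
    have haI : ∀ i, a i ∈ EI := fun i => (Finset.mem_inter.mp (hmema i)).2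
    have hbII : ∀ i, b i ∈ EII := fun i => (Finset.mem_inter.mp (hmemb i)).2
    have himga : Finset.image a Finset.univ = Y ∩ EI := by
      ext x
      simp only [Finset.mem_image, Finset.mem_univ, true_and]
      constructor
      · rintro ⟨i, rfl⟩; exact hmema i
      · intro hx
        refine ⟨(Y ∩ EI).equivFin ⟨x, hx⟩, ?_⟩
        simp only [haa, Equiv.symm_apply_apply]
    have himgb : Finset.image b Finset.univ = Y ∩ EII := by
      ext x
      simp only [Finset.mem_image, Finset.mem_univ, true_and]
      constructor
      · rintro ⟨i, rfl⟩; exact hmemb i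
      · intro hx
        refine ⟨Fin.cast hYbal.symm ((Y ∩ EII).equivFin ⟨x, hx⟩), ?_⟩
        simp only [hbb]
        have hc : Fin.cast hYbal (Fin.cast hYbal.symm ((Y ∩ EII).equivFin ⟨x, hx⟩)) =
            (Y ∩ EII).equivFin ⟨x, hx⟩ := Fin.ext (by simp)
        rw [hc, Equiv.symm_apply_apply]
    have hu : Finset.image a Finset.univ ∪ Finset.image b Finset.univ = Y := by
      rw [himga, himgb]; exact hsplit Y hYE
    have hsd : EII \ Finset.image b Finset.univ = EII \ Y := by
      rw [himgb]
      ext x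
      simp only [Finset.mem_sdiff, Finset.mem_inter]
      tauto
    have h1 := detL_balanced EI EII hdisj hI hII Lker hLker a b ha hb haI hbII
    rw [hu] at h1
    have h2 := master_weight EI EII hdisj hI hII hII0 f hfI hfII a b ha hb haI hbII
    rw [hsd, himga] at h2
    rw [h1, h2]
  -- denominator
  have hden : Matrix.det
      (1 + Matrix.of fun a b : {x // x ∈ E} => Lker (a : ℝ) (b : ℝ))
      = cst * ∑ Y ∈ E.powerset.filter (fun Y => Y.card = N), wF Y := by
    rw [det_one_add_sum_minors]
    have step2 : ∑ S : Finset {x // x ∈ E},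
        ((Matrix.of fun a b : {x // x ∈ E} => Lker (a : ℝ) (b : ℝ)).submatrix
          (Subtype.val : {p // p ∈ S} → _) Subtype.val).det
        = ∑ Y ∈ E.powerset,
            Matrix.det (Matrix.of fun p q : {x // x ∈ Y} => Lker (p : ℝ) (q : ℝ)) := by
      refine Finset.sum_nbij' (fun S : Finset {x // x ∈ E} =>
          S.map ⟨Subtype.val, Subtype.val_injective⟩)
        (fun Y => Finset.univ.filter (fun p : {x // x ∈ E} => (p : ℝ) ∈ Y))
        ?_ ?_ ?_ ?_ ?_
      · intro S _
        rw [Finset.mem_powerset]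
        intro x hx
        obtain ⟨p, -, rfl⟩ := Finset.mem_map.mp hx
        exact p.2
      · intro Y _
        exact Finset.mem_univ _
      · intro S _
        ext p
        simp only [Finset.mem_filter, Finset.mem_univ, true_and, Finset.mem_map,
          Function.Embedding.coeFn_mk]
        constructor
        · rintro ⟨q, hq, hqe⟩
          rwa [← Subtype.ext hqe]
        · intro hp
          exact ⟨p, hp, rfl⟩
      · intro Y hY
        rw [Finset.mem_powerset] at hY
        ext x
        simp only [Finset.mem_map, Finset.mem_filter, Finset.mem_univ, true_and,
          Function.Embedding.coeFn_mk]
        constructor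
        · rintro ⟨q, hq, rfl⟩
          exact hq
        · intro hx
          exact ⟨⟨x, hY hx⟩, hx, rfl⟩
      · intro S _
        have hbijS : Function.Bijective (fun p : {q // q ∈ S} =>
            (⟨(p : {x // x ∈ E}).1, Finset.mem_map_of_mem _ p.2⟩ :
              {x // x ∈ S.map ⟨Subtype.val, Subtype.val_injective⟩})) := by
          constructor
          · intro p q h
            simp only [Subtype.mk.injEq] at h
            exact Subtype.ext (Subtype.ext h)
          · rintro ⟨x, hx⟩
            obtain ⟨q, hq, rfl⟩ := Finset.mem_map.mp hx
            exact ⟨⟨q, hq⟩, rfl⟩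
        rw [← Matrix.det_submatrix_equiv_self (Equiv.ofBijective _ hbijS)
          (Matrix.of fun p q : {x // x ∈ S.map ⟨Subtype.val, Subtype.val_injective⟩} =>
            Lker (p : ℝ) (q : ℝ))]
        rfl
    rw [step2]
    -- restrict to balanced subsets
    rw [← Finset.sum_filter_of_ne (p := fun Y => (Y ∩ EI).card = (Y ∩ EII).card)
      (fun Y _ hne => by
        by_contra hunb
        exact hne (detL_unbalanced EI EII hdisj hI hII Lker hLker Y hunb))]
    rw [Finset.sum_congr rfl hbal, ← Finset.mul_sum]
    congr 1
    -- reindex by the particle-hole involution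
    have hdisj' : ∀ x : ℝ, x ∈ EI → x ∈ EII → False := fun x h1 h2 =>
      Finset.disjoint_left.mp hdisj h1 h2
    refine Finset.sum_nbij' (fun Y => (Y ∩ EI) ∪ (EII \ Y))
      (fun Z => (Z ∩ EI) ∪ (EII \ Z)) ?_ ?_ ?_ ?_ ?_
    · intro Y hY
      obtain ⟨hYE, hYbal⟩ := Finset.mem_filter.mp hY
      rw [Finset.mem_powerset] at hYE
      rw [Finset.mem_filter, Finset.mem_powerset]
      constructor
      · intro x hx
        rcases Finset.mem_union.mp hx with h | h
        · exact Finset.mem_union_left _ ((Finset.mem_inter.mp h).2)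
        · exact Finset.mem_union_right _ ((Finset.mem_sdiff.mp h).1)
      · rw [Finset.card_union_of_disjoint
          (hdisj.mono (Finset.inter_subset_right) (Finset.sdiff_subset))]
        have h1 : (EII \ Y).card + (EII ∩ Y).card = EII.card :=
          Finset.card_sdiff_add_card_inter _ _
        have h2 : (Y ∩ EII).card = (EII ∩ Y).card := by rw [Finset.inter_comm]
        omega
    · intro Z hZ
      obtain ⟨hZE, hZcard⟩ := Finset.mem_filter.mp hZ
      rw [Finset.mem_powerset] at hZE
      rw [Finset.mem_filter, Finset.mem_powerset]
      have e1 : ((Z ∩ EI) ∪ (EII \ Z)) ∩ EI = Z ∩ EI := by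
        ext x
        simp only [Finset.mem_inter, Finset.mem_union, Finset.mem_sdiff]
        constructor
        · rintro ⟨h | h, hxI⟩
          · exact ⟨h.1, hxI⟩
          · exact absurd hxI (fun hxI => hdisj' x hxI h.1)
        · intro h; exact ⟨Or.inl h, h.2⟩
      have e2 : ((Z ∩ EI) ∪ (EII \ Z)) ∩ EII = EII \ Z := by
        ext x
        simp only [Finset.mem_inter, Finset.mem_union, Finset.mem_sdiff]
        constructor
        · rintro ⟨h | h, hxII⟩
          · exact absurd hxII (fun hxII => hdisj' x h.2 hxII)
          · exact h
        · intro h; exact ⟨Or.inr h, h.1⟩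
      constructor
      · intro x hx
        rcases Finset.mem_union.mp hx with h | h
        · exact Finset.mem_union_left _ ((Finset.mem_inter.mp h).2)
        · exact Finset.mem_union_right _ ((Finset.mem_sdiff.mp h).1)
      · rw [e1, e2]
        have h1 : (EII \ Z).card + (EII ∩ Z).card = EII.card :=
          Finset.card_sdiff_add_card_inter _ _
        have h2 : (Z ∩ EI).card + (Z ∩ EII).card = Z.card := by
          rw [← Finset.card_union_of_disjoint
            (hdisj.mono (Finset.inter_subset_right) (Finset.inter_subset_right)),
            hsplit Z hZE]
        have h3 : (Z ∩ EII).card = (EII ∩ Z).card := by rw [Finset.inter_comm]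
        omega
    · intro Y hY
      obtain ⟨hYE, -⟩ := Finset.mem_filter.mp hY
      rw [Finset.mem_powerset] at hYE
      ext x
      simp only [Finset.mem_union, Finset.mem_inter, Finset.mem_sdiff]
      constructor
      · rintro (⟨(⟨hxY, hxI⟩ | ⟨hxII, hxY⟩), hxI'⟩ | ⟨hxII, hx⟩)
        · exact hxY
        · exact absurd hxI' (fun h => hdisj' x h hxII)
        · by_contra hxY
          exact hx (Or.inr ⟨hxII, fun h => hxY h⟩)
      · intro hxY
        rcases Finset.mem_union.mp (hYE hxY) with hxI | hxII
        · exact Or.inl ⟨Or.inl ⟨hxY, hxI⟩, hxI⟩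
        · refine Or.inr ⟨hxII, ?_⟩
          rintro (⟨-, hxI⟩ | ⟨-, hnY⟩)
          · exact hdisj' x hxI hxII
          · exact hnY hxY
    · intro Z hZ
      obtain ⟨hZE, -⟩ := Finset.mem_filter.mp hZ
      rw [Finset.mem_powerset] at hZE
      ext x
      simp only [Finset.mem_union, Finset.mem_inter, Finset.mem_sdiff]
      constructor
      · rintro (⟨(⟨hxZ, hxI⟩ | ⟨hxII, hxZ⟩), hxI'⟩ | ⟨hxII, hx⟩)
        · exact hxZ
        · exact absurd hxI' (fun h => hdisj' x h hxII)
        · by_contra hxZ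
          exact hx (Or.inr ⟨hxII, fun h => hxZ h⟩)
      · intro hxZ
        rcases Finset.mem_union.mp (hZE hxZ) with hxI | hxII
        · exact Or.inl ⟨Or.inl ⟨hxZ, hxI⟩, hxI⟩
        · refine Or.inr ⟨hxII, ?_⟩
          rintro (⟨-, hxI⟩ | ⟨-, hnZ⟩)
          · exact hdisj' x hxI hxII
          · exact hnZ hxZ
    · intro Y _
      rfl
  rw [hnum, hden, hwF, mul_div_mul_left _ _ hcstpos.ne']
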